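/- For every precubical set K, the path space P(|K|_bad) of the flow |K|_bad is a discrete topological space. -/

import Mathlib

/-- The predicate on set maps `{0,1}ᵖ → {0,1}^q` of being a morphism of the cube
category `□`, i.e. a (possibly empty) composite of coface maps
`δᵢᵅ = Fin.insertNth i α`. -/
inductive IsCubeMap : ∀ {p q : ℕ}, ((Fin p → Bool) → (Fin q → Bool)) → Prop
  | id {n : ℕ} : IsCubeMap (id : (Fin n → Bool) → (Fin n → Bool))
  | comp_delta {p q : ℕ} (f : (Fin p → Bool) → (Fin q → Bool)) (i : Fin (q + 1)) (α : Bool)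
      (hf : IsCubeMap f) : IsCubeMap (fun ε => Fin.insertNth i α (f ε))


theorem IsCubeMap.comp {p q r : ℕ} {g : (Fin q → Bool) → (Fin r → Bool)}
    {f : (Fin p → Bool) → (Fin q → Bool)} (hg : IsCubeMap g) (hf : IsCubeMap f) :
    IsCubeMap (g ∘ f) := by
  induction hg with
  | id => exact hf
  | comp_delta g' i α hg' ih => exact IsCubeMap.comp_delta (g' ∘ f) i α ih

/-- A flow: a small topological category without identity maps.  `states` is
the set of states, `paths a b` the topological space of (non-constant)
execution paths from `a` to `b`, with a continuous and strictly associative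
composition law. -/
structure GFlow where
  states : Type
  paths : states → states → Type
  top : ∀ a b, TopologicalSpace (paths a b)
  comp : ∀ {a b c}, paths a b → paths b c → paths a c
  comp_assoc : ∀ {a b c d} (x : paths a b) (y : paths b c) (z : paths c d),
    comp (comp x y) z = comp x (comp y z)
  comp_cont : ∀ a b c, @Continuous (paths a b × paths b c) (paths a c)
    (@instTopologicalSpaceProd _ _ (top a b) (top b c)) (top a c)
    (fun xy => comp xy.1 xy.2)

/-- A morphism of flows: a set map on states together with continuous maps on
path spaces, compatible with the composition. -/
structure FlowHom (X Y : GFlow) where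
  f0 : X.states → Y.states
  fP : ∀ {a b}, X.paths a b → Y.paths (f0 a) (f0 b)
  fP_cont : ∀ a b, @Continuous (X.paths a b) (Y.paths (f0 a) (f0 b))
    (X.top a b) (Y.top (f0 a) (f0 b)) (fun x => fP x)
  fP_comp : ∀ {a b c} (x : X.paths a b) (y : X.paths b c),
    fP (X.comp x y) = Y.comp (fP x) (fP y)

/-- Composition of morphisms of flows (`f` first, then `g`). -/
def FlowHom.comp {X Y Z : GFlow} (f : FlowHom X Y) (g : FlowHom Y Z) : FlowHom X Z where
  f0 := fun a => g.f0 (f.f0 a)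
  fP := fun x => g.fP (f.fP x)
  fP_cont := fun a b =>
    @Continuous.comp _ _ _ (X.top a b) (Y.top (f.f0 a) (f.f0 b))
      (Z.top (g.f0 (f.f0 a)) (g.f0 (f.f0 b))) _ _ (g.fP_cont _ _) (f.fP_cont a b)
  fP_comp := fun x y => by
    show g.fP (f.fP (X.comp x y)) = Z.comp (g.fP (f.fP x)) (g.fP (f.fP y))
    rw [f.fP_comp, g.fP_comp]

/-- The flow associated with the poset `{0̂ < 1̂}ⁿ` (the product order on
`{0,1}ⁿ`): there is exactly one execution path from `a` to `b` whenever
`a < b`, and the path spaces are discrete. -/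
def cubeFlow (n : ℕ) : GFlow where
  states := Fin n → Bool
  paths a b := PLift (a < b)
  top _ _ := ⊥
  comp x y := PLift.up (lt_trans x.down y.down)
  comp_assoc := by intros; rfl
  comp_cont := by
    intro a b c
    letI : TopologicalSpace (PLift (a < b)) := ⊥
    letI : TopologicalSpace (PLift (b < c)) := ⊥
    letI : TopologicalSpace (PLift (a < c)) := ⊥
    haveI : DiscreteTopology (PLift (a < b)) := ⟨rfl⟩
    haveI : DiscreteTopology (PLift (b < c)) := ⟨rfl⟩
    exact continuous_of_discreteTopology

/-- Every morphism of the cube category is strictly monotone. -/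
theorem IsCubeMap.strictMono {p q : ℕ} {f : (Fin p → Bool) → (Fin q → Bool)}
    (hf : IsCubeMap f) : StrictMono f := by
  induction hf with
  | id => exact strictMono_id
  | comp_delta g i α hg ih =>
      intro a b hab
      have h1 : Fin.insertNth (α := fun _ => Bool) i α (g a) ≤
          Fin.insertNth (α := fun _ => Bool) i α (g b) := by
        rw [Fin.insertNth_le_iff]
        constructor
        · simp
        · intro j
          simpa using (ih hab).le j
      refine lt_of_le_of_ne h1 ?_
      intro heq
      have := congr_fun heq
      apply (ih hab).ne
      funext j
      simpa [Fin.insertNth_apply_succAbove] using this (i.succAbove j)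

/-- The morphism of flows `{0̂<1̂}ᵖ → {0̂<1̂}^q` induced by a morphism of the
cube category. -/
def cubeFlowHom {p q : ℕ} (f : (Fin p → Bool) → (Fin q → Bool)) (hf : IsCubeMap f) :
    FlowHom (cubeFlow p) (cubeFlow q) where
  f0 := f
  fP := fun {a b} x => ⟨hf.strictMono x.down⟩
  fP_cont := fun a b => continuous_bot
  fP_comp := fun x y => rfl

/-- The morphism of flows `|δᵢᵅ| : {0̂<1̂}ⁿ → {0̂<1̂}ⁿ⁺¹` induced by the coface
map `δᵢᵅ`. -/
def cofaceFlow {n : ℕ} (i : Fin (n + 1)) (α : Bool) :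
    FlowHom (cubeFlow n) (cubeFlow (n + 1)) :=
  cubeFlowHom (fun ε => Fin.insertNth i α ε)
    (IsCubeMap.comp_delta id i α IsCubeMap.id)

/-- A precubical set: a family of sets of `n`-cubes together with face maps
`∂ᵢᵅ` satisfying the cubical relations. -/
structure PrecubSet where
  cube : ℕ → Type
  face : ∀ n, Fin (n + 1) → Bool → cube (n + 1) → cube n
  rel : ∀ (n : ℕ) (i j : Fin (n + 1)), i ≤ j → ∀ (α β : Bool) (x : cube (n + 2)),
    face n i α (face (n + 1) j.succ β x) = face n j β (face (n + 1) i.castSucc α x)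

/-- `(X, c)` is a bad geometric realization `|K|_bad` of the precubical set
`K`: `c` is a cocone (compatible with the face maps) from the diagram of the
cubes of `K` — each `n`-cube realized as the flow of the poset `{0̂<1̂}ⁿ` —
to the flow `X`, and this cocone is colimiting, i.e.
`X = colim_{□[n] → K} {0̂<1̂}ⁿ` in the category of flows. -/
def IsBadRealization (K : PrecubSet) (X : GFlow)
    (c : ∀ n, K.cube n → FlowHom (cubeFlow n) X) : Prop :=
  (∀ (n : ℕ) (i : Fin (n + 1)) (α : Bool) (x : K.cube (n + 1)),
    c n (K.face n i α x) = (cofaceFlow i α).comp (c (n + 1) x)) ∧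
  (∀ (Z : GFlow) (d : ∀ n, K.cube n → FlowHom (cubeFlow n) Z),
    (∀ (n : ℕ) (i : Fin (n + 1)) (α : Bool) (x : K.cube (n + 1)),
      d n (K.face n i α x) = (cofaceFlow i α).comp (d (n + 1) x)) →
    ∃! h : FlowHom X Z, ∀ (n : ℕ) (x : K.cube n), d n x = (c n x).comp h)

/-- For every precubical set `K`, the path space `ℙ(|K|_bad)` of the flow
`|K|_bad = colim_{□[n]→K} {0̂<1̂}ⁿ` is a discrete topological space (each space
of non-constant execution paths is discrete). -/
theorem flowHom_fP_heq {X Y : GFlow} {g k : FlowHom X Y} (e : g = k) {a b : X.states}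
    (x : X.paths a b) : HEq (g.fP x) (k.fP x) := by subst e; rfl

/-- For every precubical set `K`, the path space `ℙ(|K|_bad)` of the flow
`|K|_bad = colim_{□[n]→K} {0̂<1̂}ⁿ` is a discrete topological space (each space
of non-constant execution paths is discrete). -/
theorem badRealization_paths_discrete (K : PrecubSet) (X : GFlow)
    (c : ∀ n, K.cube n → FlowHom (cubeFlow n) X) (hc : IsBadRealization K X c)
    (a b : X.states) :
    @DiscreteTopology (X.paths a b) (X.top a b) := by
  classical
  -- the discretized copy of `X`
  set Z : GFlow :=
    { states := X.states
      paths := X.paths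
      top := fun _ _ => ⊥
      comp := X.comp
      comp_assoc := X.comp_assoc
      comp_cont := fun a b c => by
        letI : TopologicalSpace (X.paths a b) := ⊥
        letI : TopologicalSpace (X.paths b c) := ⊥
        letI : TopologicalSpace (X.paths a c) := ⊥
        haveI : DiscreteTopology (X.paths a b) := ⟨rfl⟩
        haveI : DiscreteTopology (X.paths b c) := ⟨rfl⟩
        exact continuous_of_discreteTopology } with hZ
  -- transfer a morphism from a cube into `X` to a morphism into `Z`
  let toZ : ∀ {n : ℕ}, FlowHom (cubeFlow n) X → FlowHom (cubeFlow n) Z :=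
    fun {n} g =>
      { f0 := g.f0
        fP := g.fP
        fP_cont := fun a b => continuous_bot
        fP_comp := g.fP_comp }
  let d : ∀ n, K.cube n → FlowHom (cubeFlow n) Z := fun n x => toZ (c n x)
  have hd : ∀ (n : ℕ) (i : Fin (n + 1)) (α : Bool) (x : K.cube (n + 1)),
      d n (K.face n i α x) = (cofaceFlow i α).comp (d (n + 1) x) := by
    intro n i α x
    show toZ (c n (K.face n i α x)) = _
    rw [hc.1 n i α x]
    rfl
  obtain ⟨h, hcomm, _⟩ := hc.2 Z d hd
  -- the identity-data morphism `Z → X`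
  let ι : FlowHom Z X :=
    { f0 := fun a => a
      fP := fun x => x
      fP_cont := fun a b => continuous_bot
      fP_comp := fun _ _ => rfl }
  let idHom : FlowHom X X :=
    { f0 := fun a => a
      fP := fun x => x
      fP_cont := fun a b => @continuous_id _ (X.top a b)
      fP_comp := fun _ _ => rfl }
  obtain ⟨h', _, huniq⟩ := hc.2 X c hc.1
  have h1 : FlowHom.comp h ι = h' := huniq _ (by
    intro n x
    have := congrArg (fun (g : FlowHom (cubeFlow n) Z) => g.comp ι) (hcomm n x)
    exact this)
  have h2 : idHom = h' := huniq _ (fun n x => rfl)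
  have heq : FlowHom.comp h ι = idHom := h1.trans h2.symm
  -- hence `h.fP` is injective on each path space
  have key : ∀ x : X.paths a b, HEq (h.fP x) x := by
    intro x
    have := flowHom_fP_heq heq (a := a) (b := b) x
    exact this
  have hinj : Function.Injective (fun x : X.paths a b => h.fP x) := by
    intro x y hxy
    have hxy' : h.fP x = h.fP y := hxy
    exact eq_of_heq (((key x).symm.trans (heq_of_eq hxy')).trans (key y))
  -- conclude discreteness
  letI : TopologicalSpace (X.paths a b) := X.top a b
  letI : TopologicalSpace (Z.paths (h.f0 a) (h.f0 b)) := Z.top (h.f0 a) (h.f0 b)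
  haveI : DiscreteTopology (Z.paths (h.f0 a) (h.f0 b)) := ⟨rfl⟩
  rw [discreteTopology_iff_isOpen_singleton]
  intro x
  have hpre : {x} = (fun y : X.paths a b => h.fP y) ⁻¹' {h.fP x} := by
    ext y
    simp only [Set.mem_singleton_iff, Set.mem_preimage]
    exact ⟨fun e => e ▸ rfl, fun e => (hinj e).symm ▸ rfl⟩
  rw [hpre]
  exact (h.fP_cont a b).isOpen_preimage _ (isOpen_discrete _)
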